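/- There exists a two-block task instance with a discrete type distribution in which selling skips at two prices (one for skipping both blocks, one for skipping only the last block) yields strictly more revenue than the optimal single skip price. Concretely, with v = 1, types γ ∈ {0.25, 0.75} each with probability 1/2, marginal value (1−γ²) for skipping both blocks and (1−γ) for skipping the last block: prices (13/16, 1/4) are incentive compatible (the low-γ type weakly prefers buying both blocks, the high-γ type weakly prefers waiting then buying the last block) and yield expected revenue 0.5·(13/16) + 0.5·(1/4) = 17/32 ≈ 0.53, whereas the best single first-round skip price yields at most 0.46875. -/
import Mathlib


/-- A two-block task instance (v = 1, types 0.25 and 0.75 each with probability 1/2)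
where selling two skips at prices (13/16, 1/4) is incentive compatible, yields
revenue 17/32, and strictly beats every single first-round skip price, whose
revenue is at most 0.46875. -/
theorem multi_skip_beats_single_skip :
    let γh : ℝ := 0.25
    let γl : ℝ := 0.75
    let p₀ : ℝ := 13 / 16
    let p₁ : ℝ := 1 / 4
    -- the high (impatient, γ = 0.25) type weakly prefers buying both blocks
    ((1 - γh ^ 2) - p₀ ≥ γh * ((1 - γh) - p₁)) ∧
    (0 ≤ (1 - γh ^ 2) - p₀) ∧
    -- the low (patient, γ = 0.75) type weakly prefers waiting then buying
    (γl * ((1 - γl) - p₁) ≥ (1 - γl ^ 2) - p₀) ∧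
    (0 ≤ γl * ((1 - γl) - p₁)) ∧
    -- two-price revenue
    ((1 / 2) * p₀ + (1 / 2) * p₁ = 17 / 32) ∧
    -- any single first-round skip price earns at most 0.46875
    (∀ q : ℝ, 0 ≤ q →
      (if q ≤ 1 - γh ^ 2 then (1 / 2) * q else 0)
        + (if q ≤ 1 - γl ^ 2 then (1 / 2) * q else 0) ≤ 0.46875) ∧
    ((0.46875 : ℝ) < 17 / 32) := by
  refine ⟨by norm_num, by norm_num, by norm_num, by norm_num, by norm_num, ?_, by norm_num⟩
  intro q hq
  split_ifs with h1 h2 h2 <;> norm_num at * <;> linarith
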